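/- There exists a connected simple graph G on 16 vertices (with no loops or multiple edges) such that μ(G) > max over all vertices v of G of ( m(v)²/d(v) + m(v) ), where μ(G) is the Laplacian spectral radius of G, d(v) is the degree of v in G, and m(v) is the average degree of the neighbors of v in G. In other words, the conjectured upper bound μ(G) ≤ max_{v∈V(G)} ( m(v)²/d(v) + m(v) ) for nontrivial connected simple graphs fails for some connected graph of order 16. -/

import Mathlib

open SimpleGraph Matrix

/-- The degree of a vertex (with classical decidability of adjacency). -/
noncomputable def vertDeg {V : Type*} [Fintype V] (G : SimpleGraph V) (v : V) : ℕ :=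
  letI : DecidableRel G.Adj := Classical.decRel _
  G.degree v

/-- The average degree of the neighbors of a vertex `v`:
`m(v) = (∑_{u ~ v} d(u)) / d(v)`. -/
noncomputable def avgNeighborDeg {V : Type*} [Fintype V] (G : SimpleGraph V) (v : V) : ℝ :=
  letI : DecidableRel G.Adj := Classical.decRel _
  (∑ u ∈ G.neighborFinset v, (G.degree u : ℝ)) / (G.degree v : ℝ)

/-- The Laplacian spectral radius of a graph: the largest eigenvalue of the
Laplacian matrix `L(G) = D(G) - A(G)`. -/
noncomputable def lapSpectralRadius {V : Type*} [Fintype V] [DecidableEq V]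
    (G : SimpleGraph V) : ℝ :=
  letI : DecidableRel G.Adj := Classical.decRel _
  ⨆ i, (SimpleGraph.posSemidef_lapMatrix ℝ G).isHermitian.eigenvalues i


local notation "⟪" x ", " y "⟫" => @inner ℝ _ _ x y

open Finset in
private lemma rayleigh_le' {n : Type*} [Fintype n] [DecidableEq n] [Nonempty n]
    {A : Matrix n n ℝ} (hA : A.IsHermitian) (x : n → ℝ) :
    x ⬝ᵥ (A *ᵥ x) ≤ (⨆ i, hA.eigenvalues i) * (x ⬝ᵥ x) := by
  classical
  have hbdd : BddAbove (Set.range hA.eigenvalues) := (Set.finite_range _).bddAbove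
  set S := ⨆ i, hA.eigenvalues i with hS
  have hle : ∀ i, hA.eigenvalues i ≤ S := fun i => le_ciSup hbdd i
  set b := hA.eigenvectorBasis with hb
  set x' : EuclideanSpace ℝ n := (WithLp.equiv 2 (n → ℝ)).symm x with hx'
  have happ : ∀ j, x' j = x j := fun j => rfl
  have hinner : ∀ u v : EuclideanSpace ℝ n, ⟪u, v⟫ = ∑ i, u i * v i := by
    intro u v
    simp [PiLp.inner_apply, RCLike.inner_apply, mul_comm]
  have hsym : ∀ i, ⟪b i, ((WithLp.equiv 2 (n → ℝ)).symm (A *ᵥ x))⟫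
      = hA.eigenvalues i * ⟪b i, x'⟫ := by
    intro i
    have hAT : Aᵀ = A := by
      rw [← conjTranspose_eq_transpose_of_trivial, hA.eq]
    have h1 : (⇑(b i)) ⬝ᵥ (A *ᵥ x) = (A *ᵥ ⇑(b i)) ⬝ᵥ x := by
      rw [dotProduct_mulVec, ← mulVec_transpose, hAT]
    have h2 : A *ᵥ ⇑(b i) = hA.eigenvalues i • ⇑(b i) := hA.mulVec_eigenvectorBasis i
    rw [hinner, hinner]
    calc ∑ j, (b i) j * (A *ᵥ x) j = (⇑(b i)) ⬝ᵥ (A *ᵥ x) := rfl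
      _ = (A *ᵥ ⇑(b i)) ⬝ᵥ x := h1
      _ = (hA.eigenvalues i • ⇑(b i)) ⬝ᵥ x := by rw [h2]
      _ = hA.eigenvalues i * ∑ j, (b i) j * x' j := by
          simp [smul_dotProduct, dotProduct, smul_eq_mul, happ, mul_assoc, Finset.mul_sum]
  have key : x ⬝ᵥ (A *ᵥ x) = ∑ i, hA.eigenvalues i * (⟪b i, x'⟫ * ⟪b i, x'⟫) := by
    have hsum := b.sum_inner_mul_inner x' ((WithLp.equiv 2 (n → ℝ)).symm (A *ᵥ x))
    calc x ⬝ᵥ (A *ᵥ x) = ⟪x', ((WithLp.equiv 2 (n → ℝ)).symm (A *ᵥ x))⟫ := by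
          rw [hinner]; rfl
      _ = ∑ i, ⟪x', b i⟫ * ⟪b i, ((WithLp.equiv 2 (n → ℝ)).symm (A *ᵥ x))⟫ := hsum.symm
      _ = ∑ i, hA.eigenvalues i * (⟪b i, x'⟫ * ⟪b i, x'⟫) := by
          refine Finset.sum_congr rfl fun i _ => ?_
          rw [hsym i, real_inner_comm x' (b i)]; ring
  have key2 : x ⬝ᵥ x = ∑ i, ⟪b i, x'⟫ * ⟪b i, x'⟫ := by
    have hsum := b.sum_inner_mul_inner x' x'
    calc x ⬝ᵥ x = ⟪x', x'⟫ := by rw [hinner]; rfl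
      _ = ∑ i, ⟪x', b i⟫ * ⟪b i, x'⟫ := hsum.symm
      _ = ∑ i, ⟪b i, x'⟫ * ⟪b i, x'⟫ := by
          refine Finset.sum_congr rfl fun i _ => ?_
          rw [real_inner_comm x' (b i)]
  rw [key, key2, Finset.mul_sum]
  refine Finset.sum_le_sum fun i _ => ?_
  exact mul_le_mul_of_nonneg_right (hle i) (mul_self_nonneg _)

private def ceEdges : List (Fin 16 × Fin 16) :=
  [(0,2), (0,8), (0,14), (0,15), (1,9), (1,12), (1,13), (1,15), (2,6), (2,7), (2,11), (3,5), (3,10), (3,13), (4,5), (4,8), (4,12), (4,15), (5,14), (6,9), (6,14), (7,9), (7,13), (7,15), (8,10), (8,11), (10,12), (11,12), (11,13), (11,15)]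

private def ceG : SimpleGraph (Fin 16) where
  Adj i j := (i, j) ∈ ceEdges ∨ (j, i) ∈ ceEdges
  symm := ⟨fun _ _ h => h.symm⟩
  loopless := by
    refine ⟨?_⟩
    show ∀ i : Fin 16, ¬((i, i) ∈ ceEdges ∨ (i, i) ∈ ceEdges)
    decide

private instance ceGDec : DecidableRel ceG.Adj :=
  fun i j => inferInstanceAs (Decidable ((i, j) ∈ ceEdges ∨ (j, i) ∈ ceEdges))

private lemma ceG_connected : ceG.Connected := by
  rw [SimpleGraph.connected_iff_exists_forall_reachable]
  refine ⟨0, fun w => ?_⟩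
  fin_cases w
  · exact SimpleGraph.Reachable.refl _
  · exact ((SimpleGraph.Adj.reachable (show ceG.Adj 0 15 by decide)).trans (SimpleGraph.Adj.reachable (show ceG.Adj 15 1 by decide)))
  · exact (SimpleGraph.Adj.reachable (show ceG.Adj 0 2 by decide))
  · exact (((SimpleGraph.Adj.reachable (show ceG.Adj 0 14 by decide)).trans (SimpleGraph.Adj.reachable (show ceG.Adj 14 5 by decide))).trans (SimpleGraph.Adj.reachable (show ceG.Adj 5 3 by decide)))
  · exact ((SimpleGraph.Adj.reachable (show ceG.Adj 0 8 by decide)).trans (SimpleGraph.Adj.reachable (show ceG.Adj 8 4 by decide)))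
  · exact ((SimpleGraph.Adj.reachable (show ceG.Adj 0 14 by decide)).trans (SimpleGraph.Adj.reachable (show ceG.Adj 14 5 by decide)))
  · exact ((SimpleGraph.Adj.reachable (show ceG.Adj 0 2 by decide)).trans (SimpleGraph.Adj.reachable (show ceG.Adj 2 6 by decide)))
  · exact ((SimpleGraph.Adj.reachable (show ceG.Adj 0 2 by decide)).trans (SimpleGraph.Adj.reachable (show ceG.Adj 2 7 by decide)))
  · exact (SimpleGraph.Adj.reachable (show ceG.Adj 0 8 by decide))
  · exact (((SimpleGraph.Adj.reachable (show ceG.Adj 0 2 by decide)).trans (SimpleGraph.Adj.reachable (show ceG.Adj 2 6 by decide))).trans (SimpleGraph.Adj.reachable (show ceG.Adj 6 9 by decide)))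
  · exact ((SimpleGraph.Adj.reachable (show ceG.Adj 0 8 by decide)).trans (SimpleGraph.Adj.reachable (show ceG.Adj 8 10 by decide)))
  · exact ((SimpleGraph.Adj.reachable (show ceG.Adj 0 2 by decide)).trans (SimpleGraph.Adj.reachable (show ceG.Adj 2 11 by decide)))
  · exact (((SimpleGraph.Adj.reachable (show ceG.Adj 0 2 by decide)).trans (SimpleGraph.Adj.reachable (show ceG.Adj 2 11 by decide))).trans (SimpleGraph.Adj.reachable (show ceG.Adj 11 12 by decide)))
  · exact (((SimpleGraph.Adj.reachable (show ceG.Adj 0 2 by decide)).trans (SimpleGraph.Adj.reachable (show ceG.Adj 2 7 by decide))).trans (SimpleGraph.Adj.reachable (show ceG.Adj 7 13 by decide)))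
  · exact (SimpleGraph.Adj.reachable (show ceG.Adj 0 14 by decide))
  · exact (SimpleGraph.Adj.reachable (show ceG.Adj 0 15 by decide))

private def ceXint : Fin 16 → ℤ := fun i =>
  match i.val with
  | 0 => 25
  | 1 => 26
  | 2 => -26
  | 3 => 4
  | 4 => 25
  | 5 => -4
  | 6 => 8
  | 7 => 26
  | 8 => -25
  | 9 => -12
  | 10 => 9
  | 11 => 47
  | 12 => -26
  | 13 => -25
  | 14 => -6
  | 15 => -47
  | _ => 0

private noncomputable def ceX : Fin 16 → ℝ := fun i => ((ceXint i : ℤ) : ℝ)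

private def ceLint : Fin 16 → Fin 16 → ℤ := fun i j =>
  (if i = j then (ceG.degree i : ℤ) else 0) - (if ceG.Adj i j then 1 else 0)

private lemma ceL_apply (i j : Fin 16) :
    (ceG.lapMatrix ℝ) i j = ((ceLint i j : ℤ) : ℝ) := by
  simp only [SimpleGraph.lapMatrix, SimpleGraph.degMatrix, SimpleGraph.adjMatrix,
    Matrix.sub_apply, Matrix.diagonal_apply, Matrix.of_apply, ceLint]
  split_ifs <;> push_cast <;> ring

private lemma ceQuad : ceX ⬝ᵥ ((ceG.lapMatrix ℝ) *ᵥ ceX) = ((81457 : ℤ) : ℝ) := by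
  have h1 : ceX ⬝ᵥ ((ceG.lapMatrix ℝ) *ᵥ ceX)
      = ∑ i : Fin 16, ((ceXint i : ℤ) : ℝ) * (∑ j : Fin 16, ((ceLint i j : ℤ) : ℝ) * ((ceXint j : ℤ) : ℝ)) := by
    refine Finset.sum_congr rfl fun i _ => ?_
    simp only [ceX, Matrix.mulVec, dotProduct]
    congr 1
    refine Finset.sum_congr rfl fun j _ => ?_
    rw [ceL_apply]
  have h2 : (∑ i : Fin 16, ceXint i * (∑ j : Fin 16, ceLint i j * ceXint j)) = 81457 := by decide
  rw [h1, ← h2]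
  push_cast
  rfl

private lemma ceNormSq : ceX ⬝ᵥ ceX = ((9979 : ℤ) : ℝ) := by
  have h2 : (∑ i : Fin 16, ceXint i * ceXint i) = 9979 := by decide
  have h1 : ceX ⬝ᵥ ceX = ∑ i : Fin 16, ((ceXint i : ℤ) : ℝ) * ((ceXint i : ℤ) : ℝ) := rfl
  rw [h1, ← h2]
  push_cast
  rfl

private lemma ceVertDeg (v : Fin 16) : vertDeg ceG v = ceG.degree v := by
  unfold vertDeg
  congr 1
  exact Subsingleton.elim _ _

private lemma ceAvg (v : Fin 16) :
    avgNeighborDeg ceG v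
      = ((∑ u ∈ ceG.neighborFinset v, ceG.degree u : ℕ) : ℝ) / ((ceG.degree v : ℕ) : ℝ) := by
  unfold avgNeighborDeg
  rw [Subsingleton.elim (Classical.decRel ceG.Adj) ceGDec]
  rw [Nat.cast_sum]

private lemma ceBoundNat :
    ∀ v : Fin 16, 0 < ceG.degree v ∧
      27 * (∑ u ∈ ceG.neighborFinset v, ceG.degree u) ^ 2
        + 27 * (∑ u ∈ ceG.neighborFinset v, ceG.degree u) * (ceG.degree v) ^ 2
        ≤ 220 * (ceG.degree v) ^ 3 := by decide

set_option maxHeartbeats 1000000 in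
/-- There is a connected simple graph on 16 vertices with
`μ(G) > max_{v} ( m(v)^2 / d(v) + m(v) )`. -/
theorem laplacian_upper_bound_fails_on_order_16 :
    ∃ G : SimpleGraph (Fin 16), G.Connected ∧
      (⨆ v : Fin 16, ((avgNeighborDeg G v) ^ 2 / (vertDeg G v : ℝ) + avgNeighborDeg G v))
        < lapSpectralRadius G := by
  refine ⟨ceG, ceG_connected, lt_of_le_of_lt (b := (220/27 : ℝ)) ?_ ?_⟩
  · apply ciSup_le
    intro v
    rw [ceAvg v, ceVertDeg v]
    obtain ⟨hdpos, hkey⟩ := ceBoundNat v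
    set s : ℕ := ∑ u ∈ ceG.neighborFinset v, ceG.degree u with hs
    set d : ℕ := ceG.degree v with hd
    have hd' : (0 : ℝ) < (d : ℝ) := by exact_mod_cast hdpos
    have hkey' : 27 * (s : ℝ) ^ 2 + 27 * (s : ℝ) * (d : ℝ) ^ 2 ≤ 220 * (d : ℝ) ^ 3 := by
      exact_mod_cast hkey
    have heq : ((s : ℝ) / d) ^ 2 / d + (s : ℝ) / d
        = (27 * (s : ℝ) ^ 2 + 27 * (s : ℝ) * (d : ℝ) ^ 2) / (27 * (d : ℝ) ^ 3) := by
      field_simp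
    rw [heq, div_le_div_iff₀ (by positivity) (by norm_num)]
    nlinarith [hkey', hd']
  · have key : ∀ (d : DecidableRel ceG.Adj),
        (⨆ i, (@SimpleGraph.posSemidef_lapMatrix (Fin 16) ℝ _ ceG d _ _ _ _).isHermitian.eigenvalues i)
          = ⨆ i, (@SimpleGraph.posSemidef_lapMatrix (Fin 16) ℝ _ ceG ceGDec _ _ _ _).isHermitian.eigenvalues i := by
      intro d
      cases Subsingleton.elim d ceGDec
      rfl
    unfold lapSpectralRadius
    rw [key]
    have hray := rayleigh_le'
      (@SimpleGraph.posSemidef_lapMatrix (Fin 16) ℝ _ ceG ceGDec _ _ _ _).isHermitian ceX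
    rw [ceQuad, ceNormSq] at hray
    push_cast at hray
    nlinarith [hray]
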